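/- Let θ ≥ 2 be an integer and φ : Δ_θ → ℝ continuous. For each n ≥ 1 suppose given real numbers φ_n^{(λ)}(μ) for each pair λ, μ ⊢_θ n, together with a sequence δ_n → 0 such that |φ_n^{(λ)}(μ) − φ(μ/n)| ≤ δ_n for all n and all λ, μ ⊢_θ n (where μ/n = (μ_1/n,…,μ_θ/n) ∈ Δ_θ). If λ^{(n)} ⊢_θ n is a sequence with λ^{(n)}/n → x ∈ Δ_θ as n → ∞, then (1/n)·log( ∑_{μ ⊢_θ n, μ ⊵ λ^{(n)}} exp(n·φ_n^{(λ^{(n)})}(μ)) ) → max_{y ∈ Δ_θ(x)} φ(y) as n → ∞. -/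

import Mathlib

open Filter Topology

/-- The set `Δ_θ` of decreasing probability vectors in `ℝ^θ`. -/
def simplexOrd (θ : ℕ) : Set (Fin θ → ℝ) :=
  {x | (∀ i j : Fin θ, i ≤ j → x j ≤ x i) ∧ (∀ i, 0 ≤ x i) ∧ ∑ i, x i = 1}

/-- `y ⊵ x`: domination of partial sums (real vectors). -/
def domR (θ : ℕ) (y x : Fin θ → ℝ) : Prop :=
  ∀ j : Fin θ, (∑ i ∈ Finset.univ.filter (fun i : Fin θ => i ≤ j), x i)
    ≤ ∑ i ∈ Finset.univ.filter (fun i : Fin θ => i ≤ j), y i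

/-- `Δ_θ(x) = {y ∈ Δ_θ : y ⊵ x}`. -/
def domSet (θ : ℕ) (x : Fin θ → ℝ) : Set (Fin θ → ℝ) :=
  {y ∈ simplexOrd θ | domR θ y x}

/-- The finset of partitions of `n` into at most `θ` parts. -/
def partitionsTh (θ n : ℕ) : Finset (Fin θ → ℕ) :=
  (Fintype.piFinset fun _ : Fin θ => Finset.range (n + 1)).filter
    (fun lam => (∀ i j : Fin θ, i ≤ j → lam j ≤ lam i) ∧ ∑ i, lam i = n)

/-- `μ ⊵ λ`: domination of partial sums (partitions). -/
def domN (θ : ℕ) (μ lam : Fin θ → ℕ) : Prop :=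
  ∀ j : Fin θ, (∑ i ∈ Finset.univ.filter (fun i : Fin θ => i ≤ j), lam i)
    ≤ ∑ i ∈ Finset.univ.filter (fun i : Fin θ => i ≤ j), μ i

instance (θ : ℕ) (μ lam : Fin θ → ℕ) : Decidable (domN θ μ lam) := by
  unfold domN; infer_instance


namespace Stmt5Aux

variable {θ : ℕ}

/-- padded coordinates: extend a `Fin θ`-vector by `0`. -/
def pad {M : Type*} [Zero M] (v : Fin θ → M) (k : ℕ) : M :=
  if h : k < θ then v ⟨k, h⟩ else 0

/-- partial sums -/
def psum {M : Type*} [AddCommMonoid M] (v : Fin θ → M) (k : ℕ) : M :=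
  ∑ i ∈ Finset.range k, pad v i

lemma pad_coe {M : Type*} [Zero M] (v : Fin θ → M) (i : Fin θ) : pad v i.1 = v i := by
  simp [pad, i.2]

lemma filter_sum_eq {M : Type*} [AddCommMonoid M] (v : Fin θ → M) (j : Fin θ) :
    ∑ i ∈ Finset.univ.filter (fun i : Fin θ => i ≤ j), v i = psum v (j.1 + 1) := by
  have h1 : ∑ i ∈ Finset.univ.filter (fun i : Fin θ => i ≤ j), v i
      = ∑ i : Fin θ, (fun k : ℕ => if k ≤ j.1 then pad v k else 0) i.1 := by
    rw [Finset.sum_filter]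
    refine Finset.sum_congr rfl fun i _ => ?_
    show _ = if (i : ℕ) ≤ (j : ℕ) then pad v i.1 else 0
    by_cases h : i ≤ j
    · rw [if_pos h, if_pos (by exact_mod_cast h), pad_coe]
    · rw [if_neg h, if_neg (by exact_mod_cast h)]
  rw [h1, Fin.sum_univ_eq_sum_range (fun k : ℕ => if k ≤ (j : ℕ) then pad v k else 0) θ]
  rw [psum]
  rw [← Finset.sum_subset (Finset.range_subset_range.2 j.2)]
  · refine Finset.sum_congr rfl fun k hk => ?_
    rw [if_pos (Nat.lt_succ_iff.1 (Finset.mem_range.1 hk))]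
  · intro k _ hk
    rw [if_neg (fun h => hk (Finset.mem_range.2 (Nat.lt_succ_of_le h)))]

lemma psum_succ {M : Type*} [AddCommMonoid M] (v : Fin θ → M) (k : ℕ) :
    psum v (k + 1) = psum v k + pad v k := Finset.sum_range_succ _ _

lemma psum_zero {M : Type*} [AddCommMonoid M] (v : Fin θ → M) : psum v 0 = 0 := rfl

lemma psum_theta {M : Type*} [AddCommMonoid M] (v : Fin θ → M) : psum v θ = ∑ i, v i := by
  rw [psum, ← Fin.sum_univ_eq_sum_range]
  exact Finset.sum_congr rfl fun i _ => pad_coe v i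

lemma psum_of_ge {M : Type*} [AddCommMonoid M] (v : Fin θ → M) {k : ℕ} (hk : θ ≤ k) :
    psum v k = ∑ i, v i := by
  rw [← psum_theta]
  unfold psum
  rw [← Finset.sum_subset (Finset.range_subset_range.2 hk)]
  intro i _ hi
  have : ¬ i < θ := fun h => hi (Finset.mem_range.2 h)
  simp [pad, this]

/-- pad is antitone for a decreasing nonneg vector -/
lemma pad_antitone (v : Fin θ → ℝ) (hdec : ∀ i j : Fin θ, i ≤ j → v j ≤ v i)
    (hnn : ∀ i, 0 ≤ v i) : ∀ k l : ℕ, k ≤ l → pad v l ≤ pad v k := by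
  intro k l hkl
  unfold pad
  by_cases hl : l < θ
  · have hk : k < θ := lt_of_le_of_lt hkl hl
    rw [dif_pos hl, dif_pos hk]
    exact hdec ⟨k, hk⟩ ⟨l, hl⟩ (by exact_mod_cast hkl)
  · rw [dif_neg hl]
    by_cases hk : k < θ
    · rw [dif_pos hk]; exact hnn _
    · rw [dif_neg hk]


-- continuity of psum
lemma continuous_psum (k : ℕ) : Continuous (fun v : Fin θ → ℝ => psum v k) := by
  unfold psum pad
  refine continuous_finset_sum _ fun i _ => ?_
  by_cases h : i < θ
  · simpa [h] using continuous_apply (⟨i, h⟩ : Fin θ)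
  · simp [h]; exact continuous_const

lemma isClosed_simplexOrd : IsClosed (simplexOrd θ) := by
  have h1 : IsClosed {v : Fin θ → ℝ | ∀ i j : Fin θ, i ≤ j → v j ≤ v i} := by
    have : {v : Fin θ → ℝ | ∀ i j : Fin θ, i ≤ j → v j ≤ v i}
        = ⋂ i : Fin θ, ⋂ j : Fin θ, {v | i ≤ j → v j ≤ v i} := by
      ext v; simp [Set.mem_iInter]
    rw [this]
    refine isClosed_iInter fun i => isClosed_iInter fun j => ?_
    by_cases h : i ≤ j
    · simp only [h, forall_true_left]
      exact isClosed_le (continuous_apply j) (continuous_apply i)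
    · simp only [h]
      simp [Set.setOf_forall]
  have h2 : IsClosed {v : Fin θ → ℝ | ∀ i, 0 ≤ v i} := by
    have : {v : Fin θ → ℝ | ∀ i, 0 ≤ v i} = ⋂ i : Fin θ, {v | 0 ≤ v i} := by
      ext v; simp [Set.mem_iInter]
    rw [this]
    exact isClosed_iInter fun i => isClosed_le continuous_const (continuous_apply i)
  have h3 : IsClosed {v : Fin θ → ℝ | ∑ i, v i = 1} :=
    isClosed_eq (continuous_finset_sum _ fun i _ => continuous_apply i) continuous_const
  exact (h1.inter (h2.inter h3))

lemma isCompact_simplexOrd : IsCompact (simplexOrd θ) := by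
  refine IsCompact.of_isClosed_subset (isCompact_Icc (a := fun _ : Fin θ => (0:ℝ))
    (b := fun _ => 1)) isClosed_simplexOrd ?_
  rintro v ⟨hdec, hnn, hsum⟩
  constructor
  · intro i; exact hnn i
  · intro i
    calc v i ≤ ∑ j, v j := Finset.single_le_sum (fun j _ => hnn j) (Finset.mem_univ i)
    _ = 1 := hsum

lemma isClosed_domSet (x : Fin θ → ℝ) : IsClosed (domSet θ x) := by
  have h : IsClosed {v : Fin θ → ℝ | domR θ v x} := by
    have : {v : Fin θ → ℝ | domR θ v x} = ⋂ j : Fin θ,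
        {v | (∑ i ∈ Finset.univ.filter (fun i : Fin θ => i ≤ j), x i)
          ≤ ∑ i ∈ Finset.univ.filter (fun i : Fin θ => i ≤ j), v i} := by
      ext v; simp [domR, Set.mem_iInter]
    rw [this]
    refine isClosed_iInter fun j => isClosed_le continuous_const
      (continuous_finset_sum _ fun i _ => continuous_apply i)
  exact isClosed_simplexOrd.inter h

lemma isCompact_domSet (x : Fin θ → ℝ) : IsCompact (domSet θ x) :=
  IsCompact.of_isClosed_subset isCompact_simplexOrd (isClosed_domSet x)
    (fun v hv => hv.1)

lemma self_mem_domSet {x : Fin θ → ℝ} (hx : x ∈ simplexOrd θ) : x ∈ domSet θ x :=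
  ⟨hx, fun j => le_refl _⟩


lemma upperA {θ : ℕ} {φ : (Fin θ → ℝ) → ℝ} (hφ : ContinuousOn φ (simplexOrd θ))
    {x : Fin θ → ℝ} {M : ℝ} (hM : IsGreatest (φ '' domSet θ x) M)
    {ε : ℝ} (hε : 0 < ε) :
    ∃ η > (0:ℝ), ∀ y ∈ simplexOrd θ,
      (∀ j : Fin θ, psum x (j.1 + 1) - η ≤ psum y (j.1 + 1)) → φ y ≤ M + ε := by
  by_contra hcon
  push_neg at hcon
  have hstep : ∀ k : ℕ, ∃ y, y ∈ simplexOrd θ ∧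
      (∀ j : Fin θ, psum x (j.1 + 1) - 1/(k+1) ≤ psum y (j.1 + 1)) ∧ M + ε < φ y := by
    intro k
    obtain ⟨y, hy1, hy2, hy3⟩ := hcon (1/(k+1)) (by positivity)
    exact ⟨y, hy1, hy2, hy3⟩
  choose Y hY1 hY2 hY3 using hstep
  obtain ⟨ylim, hylimmem, σ, hσmono, hσtend⟩ := isCompact_simplexOrd.tendsto_subseq hY1
  have hσinv : Tendsto (fun k : ℕ => 1/((σ k : ℝ)+1)) atTop (𝓝 0) := by
    have h1 : Tendsto (fun k : ℕ => 1/((k : ℝ)+1)) atTop (𝓝 0) :=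
      tendsto_one_div_add_atTop_nhds_zero_nat
    exact h1.comp hσmono.tendsto_atTop
  have hylimdom : ylim ∈ domSet θ x := by
    refine ⟨hylimmem, fun j => ?_⟩
    rw [filter_sum_eq, filter_sum_eq]
    have hc : Tendsto (fun k => psum ((Y ∘ σ) k) (j.1+1)) atTop (𝓝 (psum ylim (j.1+1))) :=
      ((continuous_psum (j.1+1)).tendsto ylim).comp hσtend
    have hlow : Tendsto (fun k => psum x (j.1+1) - 1/((σ k : ℝ)+1)) atTop
        (𝓝 (psum x (j.1+1))) := by
      simpa using tendsto_const_nhds.sub hσinv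
    exact le_of_tendsto_of_tendsto' hlow hc (fun k => hY2 (σ k) j)
  have hφc : Tendsto (fun k => φ ((Y ∘ σ) k)) atTop (𝓝 (φ ylim)) := by
    have hns : Tendsto (Y ∘ σ) atTop (𝓝[simplexOrd θ] ylim) :=
      tendsto_nhdsWithin_iff.2 ⟨hσtend, Eventually.of_forall fun k => hY1 _⟩
    exact (hφ ylim hylimmem).tendsto.comp hns
  have h1 : M + ε ≤ φ ylim := ge_of_tendsto hφc (Eventually.of_forall fun k => (hY3 (σ k)).le)
  have h2 : φ ylim ≤ M := hM.2 ⟨ylim, hylimdom, rfl⟩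
  linarith

lemma exists_M {θ : ℕ} {φ : (Fin θ → ℝ) → ℝ} (hφ : ContinuousOn φ (simplexOrd θ))
    {x : Fin θ → ℝ} (hx : x ∈ simplexOrd θ) :
    ∃ M, IsGreatest (φ '' domSet θ x) M := by
  obtain ⟨y0, hy0, hmax⟩ := (isCompact_domSet x).exists_isMaxOn ⟨x, self_mem_domSet hx⟩
    (hφ.mono (fun v hv => hv.1))
  exact ⟨φ y0, ⟨y0, hy0, rfl⟩, by rintro _ ⟨y, hy, rfl⟩; exact hmax hy⟩


lemma psum_mono_nat {θ : ℕ} (lam : Fin θ → ℕ) {k l : ℕ} (h : k ≤ l) :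
    psum lam k ≤ psum lam l :=
  Finset.sum_le_sum_of_subset (Finset.range_subset_range.2 h)

lemma psum_le_sum_nat {θ : ℕ} (lam : Fin θ → ℕ) (k : ℕ) : psum lam k ≤ ∑ i, lam i := by
  rcases le_total k θ with h | h
  · rw [← psum_theta]; exact psum_mono_nat lam h
  · rw [psum_of_ge lam h]

lemma mem_partitionsTh {θ n : ℕ} {lam : Fin θ → ℕ}
    (hdec : ∀ i j : Fin θ, i ≤ j → lam j ≤ lam i) (hsum : ∑ i, lam i = n) :
    lam ∈ partitionsTh θ n := by
  refine Finset.mem_filter.2 ⟨Fintype.mem_piFinset.2 fun i => Finset.mem_range.2 ?_, hdec, hsum⟩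
  have : lam i ≤ ∑ j, lam j := Finset.single_le_sum (fun j _ => Nat.zero_le _) (Finset.mem_univ i)
  omega

lemma of_mem_partitionsTh {θ n : ℕ} {lam : Fin θ → ℕ} (h : lam ∈ partitionsTh θ n) :
    (∀ i j : Fin θ, i ≤ j → lam j ≤ lam i) ∧ ∑ i, lam i = n :=
  (Finset.mem_filter.1 h).2

/-- The key rounding construction. -/
lemma construct_mu {θ n : ℕ} (hθ : 1 ≤ θ) (lam : Fin θ → ℕ)
    (hlam : lam ∈ partitionsTh θ n) (Z : ℕ → ℝ)
    (hZ0 : Z 0 = 0) (hZth : Z θ = 1) (hZub : ∀ k, Z k ≤ 1)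
    (hZconc : ∀ k, Z k + Z (k + 2) ≤ 2 * Z (k + 1))
    (hdom : ∀ k, k ≤ θ → ((psum lam k : ℕ) : ℝ) ≤ n * Z k) :
    ∃ μ ∈ partitionsTh θ n, domN θ μ lam ∧
      ∀ i : Fin θ, |(μ i : ℝ) - n * (Z (i.1 + 1) - Z i.1)| ≤ (θ:ℝ)^2 + 1 := by
  obtain ⟨hlamdec, hlamsum⟩ := of_mem_partitionsTh hlam
  set q : ℕ → ℤ := fun k => (k : ℤ) * ((θ : ℤ) - k) with hq
  set W : ℕ → ℝ := fun k => n * Z k + (q k : ℝ) with hW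
  set T : ℕ → ℤ := fun k => min (n : ℤ) ⌈W k⌉ with hT
  have hqnn : ∀ k, k ≤ θ → (0:ℤ) ≤ q k := by
    intro k hk
    have h2 : (k:ℤ) ≤ (θ:ℤ) := by exact_mod_cast hk
    have h1 : (0:ℤ) ≤ (k:ℤ) := Int.ofNat_nonneg k
    exact mul_nonneg h1 (by omega)
  have hqub : ∀ k, k ≤ θ → (q k : ℝ) ≤ (θ:ℝ)^2 := by
    intro k hk
    have h2 : (k:ℤ) ≤ (θ:ℤ) := by exact_mod_cast hk
    have h1 : (0:ℤ) ≤ (k:ℤ) := Int.ofNat_nonneg k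
    have : q k ≤ (θ:ℤ)^2 := by simp only [hq]; nlinarith
    calc (q k : ℝ) ≤ (((θ:ℤ)^2 : ℤ) : ℝ) := by exact_mod_cast this
    _ = (θ:ℝ)^2 := by push_cast; ring
  -- bounds on T for k ≤ θ
  have hTlow : ∀ k, k ≤ θ → (n:ℝ) * Z k ≤ (T k : ℝ) := by
    intro k hk
    have h1 : (n:ℝ) * Z k ≤ (n:ℤ) := by
      have := hZub k
      have hn : (0:ℝ) ≤ n := Nat.cast_nonneg n
      push_cast
      nlinarith
    have h2 : (n:ℝ) * Z k ≤ (⌈W k⌉ : ℝ) := by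
      have hle : (n:ℝ) * Z k ≤ W k := by
        have := hqnn k hk
        have : (0:ℝ) ≤ (q k : ℝ) := by exact_mod_cast this
        simp only [hW]; linarith
      exact hle.trans (Int.le_ceil _)
    simp only [hT]
    rcases le_total (n:ℤ) ⌈W k⌉ with h | h
    · rw [min_eq_left h]; exact_mod_cast h1
    · rw [min_eq_right h]; exact h2
  have hTub : ∀ k, k ≤ θ → (T k : ℝ) ≤ (n:ℝ) * Z k + (θ:ℝ)^2 + 1 := by
    intro k hk
    have h1 : (T k : ℝ) ≤ (⌈W k⌉ : ℝ) := by
      have : T k ≤ ⌈W k⌉ := min_le_right _ _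
      exact_mod_cast this
    have h2 : (⌈W k⌉ : ℝ) < W k + 1 := Int.ceil_lt_add_one _
    have h3 : W k ≤ (n:ℝ) * Z k + (θ:ℝ)^2 := by
      have := hqub k hk
      simp only [hW]; linarith
    linarith
  have hTn : ∀ k, T k ≤ (n:ℤ) := fun k => min_le_left _ _
  have hT0 : T 0 = 0 := by
    simp only [hT, hW, hZ0, hq]
    norm_num
  have hTth : T θ = n := by
    have hWth : W θ = n := by simp [hW, hZth, hq]
    simp [hT, hWth, Int.ceil_intCast, Int.ceil_natCast]
  -- concavity of T
  have hTconc : ∀ k, T k + T (k + 2) ≤ 2 * T (k + 1) := by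
    intro k
    have hWc : W k + W (k + 2) + 2 ≤ 2 * W (k + 1) := by
      have hz := hZconc k
      have hqit : q k + q (k + 2) + 2 = 2 * q (k + 1) := by
        simp only [hq]; push_cast; ring
      have hqr : (q k : ℝ) + (q (k+2) : ℝ) + 2 = 2 * (q (k+1) : ℝ) := by
        exact_mod_cast congrArg (fun z : ℤ => (z : ℝ)) hqit
      have hn : (0:ℝ) ≤ n := Nat.cast_nonneg n
      simp only [hW]
      nlinarith
    have hceil : ⌈W k⌉ + ⌈W (k + 2)⌉ ≤ 2 * ⌈W (k + 1)⌉ := by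
      have h1 : (⌈W k⌉ : ℝ) < W k + 1 := Int.ceil_lt_add_one _
      have h2 : (⌈W (k+2)⌉ : ℝ) < W (k+2) + 1 := Int.ceil_lt_add_one _
      have h3 : W (k+1) ≤ (⌈W (k+1)⌉ : ℝ) := Int.le_ceil _
      have : (⌈W k⌉ : ℝ) + (⌈W (k+2)⌉ : ℝ) < 2 * (⌈W (k+1)⌉ : ℝ) + 1 := by linarith
      have h4 : ⌈W k⌉ + ⌈W (k+2)⌉ < 2 * ⌈W (k+1)⌉ + 1 := by exact_mod_cast this
      omega
    simp only [hT]
    rcases le_or_gt (n:ℤ) ⌈W (k+1)⌉ with h | h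
    · rw [min_eq_left h]
      have := min_le_left (n:ℤ) ⌈W k⌉
      have := min_le_left (n:ℤ) ⌈W (k+2)⌉
      omega
    · rw [min_eq_right h.le]
      have := min_le_right (n:ℤ) ⌈W k⌉
      have := min_le_right (n:ℤ) ⌈W (k+2)⌉
      omega
  -- increments
  set d : ℕ → ℤ := fun k => T (k + 1) - T k with hd
  have hdanti : ∀ k l, k ≤ l → d l ≤ d k := by
    have step : ∀ k, d (k + 1) ≤ d k := by
      intro k
      have h1 := hTconc k
      have h2 : T (k+1+1) = T (k+2) := by norm_num
      simp only [hd]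
      omega
    intro k l hkl
    exact antitone_nat_of_succ_le step hkl
  have hdnn : ∀ k, k < θ → 0 ≤ d k := by
    intro k hk
    have h1 : d k ≥ d (θ - 1) := hdanti k (θ - 1) (by omega)
    have h2 : d (θ - 1) = (n:ℤ) - T (θ - 1) := by
      simp only [hd]
      have : θ - 1 + 1 = θ := by omega
      rw [this, hTth]
    have := hTn (θ - 1)
    omega
  set μ : Fin θ → ℕ := fun i => (d i.1).toNat with hμ
  have hμcast : ∀ i : Fin θ, (μ i : ℤ) = d i.1 := by
    intro i
    simp only [hμ]
    exact Int.toNat_of_nonneg (hdnn i.1 i.2)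
  have hμdec : ∀ i j : Fin θ, i ≤ j → μ j ≤ μ i := by
    intro i j hij
    have : d j.1 ≤ d i.1 := hdanti i.1 j.1 (by exact_mod_cast hij)
    simp only [hμ]
    omega
  have hμpsum : ∀ m, m ≤ θ → ((psum μ m : ℕ) : ℤ) = T m := by
    intro m hm
    have : ((psum μ m : ℕ) : ℤ) = ∑ k ∈ Finset.range m, d k := by
      rw [psum, Nat.cast_sum]
      refine Finset.sum_congr rfl fun k hk => ?_
      have hkθ : k < θ := lt_of_lt_of_le (Finset.mem_range.1 hk) hm
      rw [pad, dif_pos hkθ]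
      exact hμcast ⟨k, hkθ⟩
    rw [this]
    simp only [hd]
    rw [Finset.sum_range_sub T m, hT0, sub_zero]
  have hμsum : ∑ i, μ i = n := by
    have h1 : ((∑ i, μ i : ℕ) : ℤ) = (n:ℤ) := by
      rw [← psum_theta, hμpsum θ le_rfl, hTth]
    exact_mod_cast h1
  refine ⟨μ, mem_partitionsTh hμdec hμsum, ?_, ?_⟩
  · intro j
    rw [filter_sum_eq, filter_sum_eq]
    have hj : j.1 + 1 ≤ θ := j.2
    have h1 : ((psum lam (j.1+1) : ℕ) : ℝ) ≤ n * Z (j.1+1) := hdom _ hj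
    have h2 : (n:ℝ) * Z (j.1+1) ≤ (T (j.1+1) : ℝ) := hTlow _ hj
    have h3 : ((psum μ (j.1+1) : ℕ) : ℤ) = T (j.1+1) := hμpsum _ hj
    have h4 : ((psum lam (j.1+1) : ℕ) : ℝ) ≤ ((psum μ (j.1+1) : ℕ) : ℝ) := by
      rw [show ((psum μ (j.1+1) : ℕ) : ℝ) = ((T (j.1+1) : ℤ) : ℝ) by exact_mod_cast h3]
      linarith
    exact_mod_cast h4
  · intro i
    have hi1 : i.1 + 1 ≤ θ := i.2
    have hi0 : i.1 ≤ θ := le_of_lt i.2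
    have hcast : (μ i : ℝ) = (T (i.1+1) : ℝ) - (T i.1 : ℝ) := by
      have := hμcast i
      have : ((μ i : ℕ) : ℝ) = ((d i.1 : ℤ) : ℝ) := by exact_mod_cast this
      rw [this]
      simp only [hd]
      push_cast
      ring
    rw [hcast, abs_le]
    constructor
    · have ha := hTlow _ hi1
      have hb := hTub _ hi0
      nlinarith [hb]
    · have ha := hTub _ hi1
      have hb := hTlow _ hi0
      nlinarith [ha]


-- facts about psum for simplex members
lemma psum_nonneg_incr {θ : ℕ} {y : Fin θ → ℝ} (hy : y ∈ simplexOrd θ) (k : ℕ) :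
    psum y k ≤ psum y (k+1) := by
  rw [psum_succ]
  have : (0:ℝ) ≤ pad y k := by
    unfold pad; by_cases h : k < θ
    · rw [dif_pos h]; exact hy.2.1 _
    · rw [dif_neg h]
  linarith

lemma psum_mono_simplex {θ : ℕ} {y : Fin θ → ℝ} (hy : y ∈ simplexOrd θ) :
    Monotone (psum y) :=
  monotone_nat_of_le_succ (psum_nonneg_incr hy)

lemma psum_le_one {θ : ℕ} {y : Fin θ → ℝ} (hy : y ∈ simplexOrd θ) (k : ℕ) :
    psum y k ≤ 1 := by
  rcases le_total k θ with h | h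
  · have := psum_mono_simplex hy h
    rw [psum_theta, hy.2.2] at this
    exact this
  · rw [psum_of_ge y h, hy.2.2]

lemma psum_concave {θ : ℕ} {y : Fin θ → ℝ} (hy : y ∈ simplexOrd θ) (k : ℕ) :
    psum y k + psum y (k+2) ≤ 2 * psum y (k+1) := by
  have h1 : psum y (k+1) = psum y k + pad y k := psum_succ y k
  have h2 : psum y (k+2) = psum y (k+1) + pad y (k+1) := psum_succ y (k+1)
  have h3 : pad y (k+1) ≤ pad y k := pad_antitone y hy.1 hy.2.1 k (k+1) (Nat.le_succ k)
  linarith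

/-- the perturbed partial-sum profile -/
lemma Z_spec {θ : ℕ} (hθ : 1 ≤ θ) {y : Fin θ → ℝ} (hy : y ∈ simplexOrd θ)
    {c : ℝ} (hc : 0 < c) (Z : ℕ → ℝ)
    (hZdef : Z = fun k : ℕ => min 1 (psum y k + c * k)) :
    Z 0 = 0 ∧ Z θ = 1 ∧ (∀ k, Z k ≤ 1) ∧
    (∀ k, Z k + Z (k+2) ≤ 2 * Z (k+1)) ∧
    (∀ k, psum y k ≤ Z k) ∧
    (∀ k, k ≤ θ → Z k ≤ psum y k + c * θ) ∧
    (∀ k, Z k ≤ Z (k+1)) := by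
  subst hZdef
  set Z : ℕ → ℝ := fun k => min 1 (psum y k + c * k) with hZ
  have hZle1 : ∀ k, Z k ≤ 1 := fun k => min_le_left _ _
  refine ⟨?_, ?_, hZle1, ?_, ?_, ?_, ?_⟩
  · simp [hZ, psum_zero]
  · have h1 : psum y θ = 1 := by rw [psum_theta, hy.2.2]
    have h2 : (1:ℝ) ≤ psum y θ + c * θ := by
      rw [h1]
      have : (0:ℝ) ≤ c * θ := by positivity
      linarith
    simp [hZ, min_eq_left h2]
  · intro k
    have hA : (psum y k + c*k) + (psum y (k+2) + c*(k+2)) ≤ 2 * (psum y (k+1) + c*(k+1)) := by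
      have := psum_concave hy k
      push_cast
      linarith
    simp only [hZ]
    push_cast
    rcases le_or_gt (1:ℝ) (psum y (k+1) + c*((k:ℝ)+1)) with h | h
    · rw [min_eq_left h]
      have := min_le_left (1:ℝ) (psum y k + c*k)
      have := min_le_left (1:ℝ) (psum y (k+2) + c*(k+2))
      linarith
    · rw [min_eq_right h.le]
      have := min_le_right (1:ℝ) (psum y k + c*k)
      have := min_le_right (1:ℝ) (psum y (k+2) + c*(k+2))
      linarith
  · intro k
    have h1 : psum y k ≤ 1 := psum_le_one hy k
    have h2 : psum y k ≤ psum y k + c * k := by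
      have : (0:ℝ) ≤ c * k := by positivity
      linarith
    exact le_min h1 h2
  · intro k hk
    have h1 : Z k ≤ psum y k + c * k := min_le_right _ _
    have h2 : c * k ≤ c * θ := by
      have : (k:ℝ) ≤ θ := by exact_mod_cast hk
      nlinarith
    simp only [hZ] at h1 ⊢
    linarith
  · intro k
    have h1 : psum y k + c*k ≤ psum y (k+1) + c*(k+1) := by
      have := psum_nonneg_incr hy k
      push_cast
      nlinarith
    show min 1 (psum y k + c*(k:ℝ)) ≤ min 1 (psum y (k+1) + c*((k+1:ℕ):ℝ))
    push_cast
    exact min_le_min le_rfl h1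

/-- scaled partition is in the simplex -/
lemma div_mem_simplexOrd {θ n : ℕ} (hn : 1 ≤ n) {μ : Fin θ → ℕ}
    (hμ : μ ∈ partitionsTh θ n) : (fun i => (μ i : ℝ) / n) ∈ simplexOrd θ := by
  obtain ⟨hdec, hsum⟩ := of_mem_partitionsTh hμ
  have hn' : (0:ℝ) < n := by exact_mod_cast hn
  refine ⟨?_, ?_, ?_⟩
  · intro i j hij
    have := hdec i j hij
    have : (μ j : ℝ) ≤ (μ i : ℝ) := by exact_mod_cast this
    exact div_le_div_of_nonneg_right this hn'.le |>.trans_eq rfl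
  · intro i; positivity
  · rw [← Finset.sum_div]
    have : (∑ i, (μ i : ℝ)) = n := by exact_mod_cast congrArg (Nat.cast : ℕ → ℝ) hsum
    rw [this, div_self hn'.ne']

lemma psum_cast {θ : ℕ} (lam : Fin θ → ℕ) (m : ℕ) :
    ((psum lam m : ℕ) : ℝ) = psum (fun i => (lam i : ℝ)) m := by
  rw [psum, psum, Nat.cast_sum]
  refine Finset.sum_congr rfl fun k _ => ?_
  unfold pad
  by_cases h : k < θ
  · rw [dif_pos h, dif_pos h]
  · rw [dif_neg h, dif_neg h, Nat.cast_zero]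

lemma psum_div {θ : ℕ} (v : Fin θ → ℝ) (a : ℝ) (m : ℕ) :
    psum (fun i => v i / a) m = psum v m / a := by
  rw [psum, psum, Finset.sum_div]
  refine Finset.sum_congr rfl fun k _ => ?_
  unfold pad
  by_cases h : k < θ
  · rw [dif_pos h, dif_pos h]
  · rw [dif_neg h, dif_neg h, zero_div]

lemma loglim : Tendsto (fun n : ℕ => Real.log (n+1) / n) atTop (𝓝 0) := by
  have h1 : Tendsto (fun x : ℝ => Real.log x / x) atTop (𝓝 0) := by
    have := Real.tendsto_pow_log_div_mul_add_atTop 1 0 1 one_ne_zero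
    simpa using this
  have h2 : Tendsto (fun n : ℕ => (n:ℝ) + 1) atTop atTop :=
    tendsto_atTop_add_const_right _ 1 tendsto_natCast_atTop_atTop
  have h3 : Tendsto (fun n : ℕ => Real.log ((n:ℝ)+1) / ((n:ℝ)+1)) atTop (𝓝 0) := h1.comp h2
  have h4 : Tendsto (fun n : ℕ => ((n:ℝ)+1) / n) atTop (𝓝 1) := by
    have h5 : Tendsto (fun n : ℕ => 1 + 1/(n:ℝ)) atTop (𝓝 (1 + 0)) :=
      tendsto_const_nhds.add tendsto_one_div_atTop_nhds_zero_nat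
    rw [add_zero] at h5
    refine h5.congr' ?_
    filter_upwards [eventually_ge_atTop 1] with n hn
    have hn' : (0:ℝ) < n := by exact_mod_cast hn
    field_simp
  have h6 := h3.mul h4
  rw [zero_mul] at h6
  refine h6.congr' ?_
  filter_upwards [eventually_ge_atTop 1] with n hn
  have hn' : (0:ℝ) < n := by exact_mod_cast hn
  field_simp

end Stmt5Aux

open Stmt5Aux
set_option maxHeartbeats 2000000 in
theorem stmt5 (θ : ℕ) (hθ : 2 ≤ θ)
    (φ : (Fin θ → ℝ) → ℝ) (hφ : ContinuousOn φ (simplexOrd θ))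
    (Φ : (n : ℕ) → (Fin θ → ℕ) → (Fin θ → ℕ) → ℝ)
    (δ : ℕ → ℝ) (hδ : Tendsto δ atTop (nhds 0))
    (happrox : ∀ n : ℕ, 1 ≤ n → ∀ lam ∈ partitionsTh θ n, ∀ μ ∈ partitionsTh θ n,
      |Φ n lam μ - φ (fun i => (μ i : ℝ) / n)| ≤ δ n)
    (lamseq : (n : ℕ) → Fin θ → ℕ)
    (hlamseq : ∀ n : ℕ, 1 ≤ n → lamseq n ∈ partitionsTh θ n)
    (x : Fin θ → ℝ) (hx : x ∈ simplexOrd θ)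
    (hconv : Tendsto (fun n : ℕ => fun i => (lamseq n i : ℝ) / n) atTop (nhds x)) :
    ∃ M : ℝ, IsGreatest (φ '' domSet θ x) M ∧
      Tendsto (fun n : ℕ => (1 / (n : ℝ)) * Real.log
          (∑ μ ∈ (partitionsTh θ n).filter (fun μ => domN θ μ (lamseq n)),
            Real.exp ((n : ℝ) * Φ n (lamseq n) μ)))
        atTop (nhds M) := by
  classical
  obtain ⟨M, hM⟩ := exists_M hφ hx
  obtain ⟨ystar, hystar, hystarval⟩ : ∃ y ∈ domSet θ x, φ y = M := by
    obtain ⟨y, hy, hyval⟩ := hM.1; exact ⟨y, hy, hyval⟩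
  refine ⟨M, hM, ?_⟩
  have hθ1 : 1 ≤ θ := by omega
  set S : ℕ → ℝ := fun n => ∑ μ ∈ (partitionsTh θ n).filter (fun μ => domN θ μ (lamseq n)),
      Real.exp ((n : ℝ) * Φ n (lamseq n) μ) with hS
  set Lr : ℕ → Fin θ → ℝ := fun n i => (lamseq n i : ℝ) / n with hLr
  -- basic facts
  have hlammem : ∀ n, 1 ≤ n →
      lamseq n ∈ (partitionsTh θ n).filter (fun μ => domN θ μ (lamseq n)) := by
    intro n hn
    exact Finset.mem_filter.2 ⟨hlamseq n hn, fun j => le_refl _⟩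
  have hSpos : ∀ n, 1 ≤ n → 0 < S n := by
    intro n hn
    exact Finset.sum_pos (fun μ _ => Real.exp_pos _) ⟨lamseq n, hlammem n hn⟩
  -- partial sums of lamseq/n converge to partial sums of x
  have hpsconv : ∀ m : ℕ, Tendsto (fun n => Stmt5Aux.psum (Lr n) m) atTop
      (nhds (Stmt5Aux.psum x m)) := by
    intro m
    exact ((Stmt5Aux.continuous_psum m).tendsto x).comp hconv
  have hpsev_up : ∀ c : ℝ, 0 < c → ∀ᶠ n in atTop, ∀ m : Fin (θ+1),
      Stmt5Aux.psum (Lr n) m.1 ≤ Stmt5Aux.psum x m.1 + c := by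
    intro c hc
    refine eventually_all.2 fun m => ?_
    have hev : ∀ᶠ y in nhds (Stmt5Aux.psum x m.1), y ≤ Stmt5Aux.psum x m.1 + c :=
      eventually_le_nhds (by linarith)
    exact (hpsconv m.1).eventually hev
  have hpsev_dn : ∀ c : ℝ, 0 < c → ∀ᶠ n in atTop, ∀ m : Fin (θ+1),
      Stmt5Aux.psum x m.1 - c ≤ Stmt5Aux.psum (Lr n) m.1 := by
    intro c hc
    refine eventually_all.2 fun m => ?_
    have hev : ∀ᶠ y in nhds (Stmt5Aux.psum x m.1), Stmt5Aux.psum x m.1 - c ≤ y :=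
      eventually_ge_nhds (by linarith)
    exact (hpsconv m.1).eventually hev
  have hδev : ∀ c : ℝ, 0 < c → ∀ᶠ n in atTop, δ n ≤ c := by
    intro c hc
    have hev : ∀ᶠ y in nhds (0:ℝ), y ≤ c := eventually_le_nhds (by linarith)
    exact hδ.eventually hev
  -- cast relation : psum of lamseq = n * psum of Lr
  have hpscast : ∀ n, 1 ≤ n → ∀ m : ℕ,
      ((Stmt5Aux.psum (lamseq n) m : ℕ) : ℝ) = n * Stmt5Aux.psum (Lr n) m := by
    intro n hn m
    have hn' : ((n:ℝ)) ≠ 0 := by positivity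
    rw [Stmt5Aux.psum_cast]
    have : Stmt5Aux.psum (Lr n) m = Stmt5Aux.psum (fun i => ((lamseq n i : ℕ) : ℝ)) m / n := by
      rw [← Stmt5Aux.psum_div]
    rw [this]
    field_simp
  -- UPPER BOUND
  have hup : ∀ ε : ℝ, 0 < ε → ∀ᶠ n : ℕ in atTop, (1/(n:ℝ)) * Real.log (S n) ≤ M + ε := by
    intro ε hε
    obtain ⟨η, hηpos, hA⟩ := upperA hφ hM (show (0:ℝ) < ε/4 by linarith)
    have hlogev : ∀ᶠ n : ℕ in atTop, (θ:ℝ) * (Real.log ((n:ℝ)+1) / (n:ℝ)) ≤ ε/4 := by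
      have h1 : Tendsto (fun n : ℕ => (θ:ℝ) * (Real.log ((n:ℝ)+1) / (n:ℝ))) atTop (nhds 0) := by
        simpa using loglim.const_mul (θ:ℝ)
      have hev : ∀ᶠ y in nhds (0:ℝ), y ≤ ε/4 := eventually_le_nhds (by linarith)
      exact h1.eventually hev
    filter_upwards [eventually_ge_atTop 1, hδev (ε/4) (by linarith),
      hpsev_dn η hηpos, hlogev] with n hn hδn hps hlog
    have hn' : (0:ℝ) < n := by exact_mod_cast hn
    -- each term is at most exp(n(M + ε/2))
    have hterm : ∀ μ ∈ (partitionsTh θ n).filter (fun μ => domN θ μ (lamseq n)),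
        Real.exp ((n : ℝ) * Φ n (lamseq n) μ) ≤ Real.exp ((n:ℝ) * (M + ε/2)) := by
      intro μ hμ
      obtain ⟨hμp, hμd⟩ := Finset.mem_filter.1 hμ
      set w : Fin θ → ℝ := fun i => (μ i : ℝ) / n with hw
      have hwmem : w ∈ simplexOrd θ := div_mem_simplexOrd hn hμp
      have hφw : φ w ≤ M + ε/4 := by
        refine hA w hwmem fun j => ?_
        have h1 : Stmt5Aux.psum (lamseq n) (j.1+1) ≤ Stmt5Aux.psum μ (j.1+1) := by
          have := hμd j
          rwa [filter_sum_eq, filter_sum_eq] at this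
        have h2 : ((Stmt5Aux.psum μ (j.1+1) : ℕ) : ℝ) = n * Stmt5Aux.psum w (j.1+1) := by
          rw [Stmt5Aux.psum_cast]
          have : Stmt5Aux.psum w (j.1+1)
              = Stmt5Aux.psum (fun i => ((μ i : ℕ) : ℝ)) (j.1+1) / n := by
            rw [← Stmt5Aux.psum_div]
          rw [this]
          field_simp
        have h3 := hps ⟨j.1+1, by omega⟩
        have h4 : ((Stmt5Aux.psum (lamseq n) (j.1+1) : ℕ) : ℝ)
            = n * Stmt5Aux.psum (Lr n) (j.1+1) := hpscast n hn _
        have h5 : ((Stmt5Aux.psum (lamseq n) (j.1+1) : ℕ) : ℝ)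
            ≤ ((Stmt5Aux.psum μ (j.1+1) : ℕ) : ℝ) := by exact_mod_cast h1
        have h6 : Stmt5Aux.psum x (j.1+1) - η ≤ Stmt5Aux.psum (Lr n) (j.1+1) := h3
        have h7 : n * Stmt5Aux.psum (Lr n) (j.1+1) ≤ n * Stmt5Aux.psum w (j.1+1) := by
          rw [← h4, ← h2]; exact h5
        have h8 : Stmt5Aux.psum (Lr n) (j.1+1) ≤ Stmt5Aux.psum w (j.1+1) :=
          le_of_mul_le_mul_left h7 hn'
        linarith
      have hΦ : Φ n (lamseq n) μ ≤ M + ε/2 := by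
        have := happrox n hn (lamseq n) (hlamseq n hn) μ hμp
        have habs := abs_le.1 this
        have : Φ n (lamseq n) μ ≤ φ w + δ n := by
          simp only [hw]; linarith [habs.2]
        linarith
      exact Real.exp_le_exp.2 (by nlinarith)
    have hcard : ((partitionsTh θ n).filter (fun μ => domN θ μ (lamseq n))).card
        ≤ (n+1)^θ := by
      calc ((partitionsTh θ n).filter (fun μ => domN θ μ (lamseq n))).card
          ≤ (partitionsTh θ n).card := Finset.card_filter_le _ _
      _ ≤ (Fintype.piFinset fun _ : Fin θ => Finset.range (n + 1)).card :=
          Finset.card_filter_le _ _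
      _ = (n+1)^θ := by
          rw [Fintype.card_piFinset]
          simp [Finset.card_range]
    have hSle : S n ≤ ((n+1)^θ : ℕ) * Real.exp ((n:ℝ) * (M + ε/2)) := by
      have h1 := Finset.sum_le_card_nsmul _ _ _ hterm
      rw [nsmul_eq_mul] at h1
      refine h1.trans ?_
      have : (0:ℝ) < Real.exp ((n:ℝ) * (M + ε/2)) := Real.exp_pos _
      have hc : (((partitionsTh θ n).filter (fun μ => domN θ μ (lamseq n))).card : ℝ)
          ≤ (((n+1)^θ : ℕ) : ℝ) := by exact_mod_cast hcard
      nlinarith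
    have hlogle : Real.log (S n) ≤ (θ:ℝ) * Real.log (n+1) + (n:ℝ) * (M + ε/2) := by
      have h1 := Real.log_le_log (hSpos n hn) hSle
      have h2 : Real.log (((n+1)^θ : ℕ) * Real.exp ((n:ℝ) * (M + ε/2)))
          = (θ:ℝ) * Real.log (n+1) + (n:ℝ) * (M + ε/2) := by
        rw [Real.log_mul (by positivity) (Real.exp_ne_zero _), Real.log_exp]
        congr 1
        push_cast
        rw [Real.log_pow]
      rw [h2] at h1
      exact h1
    have : (1/(n:ℝ)) * Real.log (S n)
        ≤ (1/(n:ℝ)) * ((θ:ℝ) * Real.log (n+1) + (n:ℝ) * (M + ε/2)) := by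
      have hpos : (0:ℝ) ≤ 1/(n:ℝ) := by positivity
      exact mul_le_mul_of_nonneg_left hlogle hpos
    have heq : (1/(n:ℝ)) * ((θ:ℝ) * Real.log (n+1) + (n:ℝ) * (M + ε/2))
        = (θ:ℝ) * (Real.log (n+1) / n) + (M + ε/2) := by
      field_simp
    rw [heq] at this
    linarith
  -- LOWER BOUND
  have hlo : ∀ ε : ℝ, 0 < ε → ∀ᶠ n : ℕ in atTop, M - ε ≤ (1/(n:ℝ)) * Real.log (S n) := by
    intro ε hε
    have hcw := hφ ystar hystar.1
    rw [Metric.continuousWithinAt_iff] at hcw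
    obtain ⟨ρ, hρpos, hρ⟩ := hcw (ε/2) (by linarith)
    set c : ℝ := ρ / (2*(θ+1)) with hc
    have hcpos : 0 < c := by positivity
    set Z : ℕ → ℝ := fun k => min 1 (Stmt5Aux.psum ystar k + c * k) with hZdef
    obtain ⟨hZ0, hZth, hZub, hZconc, hZge, hZle, hZmono⟩ :=
      Z_spec hθ1 hystar.1 hcpos Z hZdef
    have hre : Tendsto (fun n : ℕ => ((θ:ℝ)^2+1)/n) atTop (nhds 0) :=
      tendsto_const_div_atTop_nhds_zero_nat _
    have hrev : ∀ᶠ n : ℕ in atTop, ((θ:ℝ)^2+1)/(n:ℝ) < ρ/2 := by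
      have hev : ∀ᶠ y in nhds (0:ℝ), y < ρ/2 := eventually_lt_nhds (by linarith)
      exact hre.eventually hev
    filter_upwards [eventually_ge_atTop 1, hδev (ε/4) (by linarith),
      hpsev_up (c/2) (by linarith), hrev] with n hn hδn hps hr
    have hn' : (0:ℝ) < n := by exact_mod_cast hn
    -- domination hypothesis for construct_mu
    have hdom : ∀ k, k ≤ θ → ((Stmt5Aux.psum (lamseq n) k : ℕ) : ℝ) ≤ n * Z k := by
      intro k hk
      rcases Nat.eq_zero_or_pos k with rfl | hk1
      · have : Stmt5Aux.psum (lamseq n) 0 = 0 := rfl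
        rw [this, hZ0]
        simp
      rcases le_or_gt 1 (Stmt5Aux.psum ystar k + c * k) with h | h
      · have hZk : Z k = 1 := min_eq_left h
        rw [hZk, mul_one]
        have h1 : Stmt5Aux.psum (lamseq n) k ≤ ∑ i, lamseq n i := psum_le_sum_nat _ _
        have h2 : ∑ i, lamseq n i = n := (of_mem_partitionsTh (hlamseq n hn)).2
        have h3 : Stmt5Aux.psum (lamseq n) k ≤ n := by omega
        exact_mod_cast h3
      · have hZk : Z k = Stmt5Aux.psum ystar k + c * k := min_eq_right h.le
        have h1 : ((Stmt5Aux.psum (lamseq n) k : ℕ) : ℝ) = n * Stmt5Aux.psum (Lr n) k :=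
          hpscast n hn k
        have h2 : Stmt5Aux.psum (Lr n) k ≤ Stmt5Aux.psum x k + c/2 := hps ⟨k, by omega⟩
        have h3 : Stmt5Aux.psum x k ≤ Stmt5Aux.psum ystar k := by
          rcases Nat.exists_eq_add_of_le hk1 with ⟨k', rfl⟩
          have hj : k' < θ := by omega
          have := hystar.2 ⟨k', hj⟩
          rw [filter_sum_eq, filter_sum_eq] at this
          have he : 1 + k' = k' + 1 := by omega
          rw [he]
          exact this
        have h4 : (1:ℝ) ≤ k := by exact_mod_cast hk1
        rw [h1, hZk]
        have h5 : Stmt5Aux.psum (Lr n) k ≤ Stmt5Aux.psum ystar k + c * k - c/2 := by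
          nlinarith
        nlinarith
    obtain ⟨μ, hμmem, hμdom, hμclose⟩ := construct_mu hθ1 (lamseq n) (hlamseq n hn) Z
      hZ0 hZth hZub hZconc hdom
    set w : Fin θ → ℝ := fun i => (μ i : ℝ) / n with hw
    have hwmem : w ∈ simplexOrd θ := div_mem_simplexOrd hn hμmem
    -- distance from w to ystar
    have hdist : dist w ystar < ρ := by
      rw [dist_pi_lt_iff hρpos]
      intro i
      have hub1 : |w i - (Z (i.1+1) - Z i.1)| ≤ ((θ:ℝ)^2+1)/n := by
        have := hμclose i
        have heq : w i - (Z (i.1+1) - Z i.1)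
            = ((μ i : ℝ) - n * (Z (i.1+1) - Z i.1)) / n := by
          simp only [hw]
          field_simp
        rw [heq, abs_div, abs_of_pos hn']
        exact div_le_div_of_nonneg_right this hn'.le
      have hub2 : |(Z (i.1+1) - Z i.1) - ystar i| ≤ c * θ := by
        have ha1 : Stmt5Aux.psum ystar (i.1+1) ≤ Z (i.1+1) := hZge _
        have ha2 : Z (i.1+1) ≤ Stmt5Aux.psum ystar (i.1+1) + c * θ := hZle _ i.2
        have hb1 : Stmt5Aux.psum ystar i.1 ≤ Z i.1 := hZge _
        have hb2 : Z i.1 ≤ Stmt5Aux.psum ystar i.1 + c * θ := hZle _ (le_of_lt i.2)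
        have hy : ystar i = Stmt5Aux.psum ystar (i.1+1) - Stmt5Aux.psum ystar i.1 := by
          rw [psum_succ, pad_coe]
          ring
        rw [hy, abs_le]
        constructor <;> nlinarith
      have hcθ : c * θ < ρ/2 := by
        rw [hc]
        rw [div_mul_eq_mul_div, div_lt_iff₀ (by positivity)]
        have : (0:ℝ) < θ := by exact_mod_cast hθ1
        nlinarith
      have : dist (w i) (ystar i) ≤ |w i - (Z (i.1+1) - Z i.1)|
          + |(Z (i.1+1) - Z i.1) - ystar i| := by
        rw [Real.dist_eq]
        exact abs_sub_le _ _ _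
      calc dist (w i) (ystar i)
          ≤ ((θ:ℝ)^2+1)/n + c * θ := by linarith
        _ < ρ/2 + ρ/2 := by linarith
        _ = ρ := by ring
    have hφw : M - ε/2 < φ w := by
      have := hρ hwmem hdist
      rw [Real.dist_eq, hystarval] at this
      have := abs_lt.1 this
      linarith [this.1]
    -- lower bound on the sum
    have hterm : Real.exp ((n:ℝ) * (M - 3*ε/4)) ≤ Real.exp ((n:ℝ) * Φ n (lamseq n) μ) := by
      have h1 := happrox n hn (lamseq n) (hlamseq n hn) μ hμmem
      have habs := abs_le.1 h1
      have h2 : φ w - δ n ≤ Φ n (lamseq n) μ := by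
        simp only [hw] at *
        linarith [habs.1]
      have h3 : M - 3*ε/4 ≤ Φ n (lamseq n) μ := by linarith
      exact Real.exp_le_exp.2 (by nlinarith)
    have hSge : Real.exp ((n:ℝ) * (M - 3*ε/4)) ≤ S n := by
      refine hterm.trans ?_
      simp only [hS]
      refine Finset.single_le_sum (f := fun μ' => Real.exp ((n:ℝ) * Φ n (lamseq n) μ'))
        (fun μ' _ => (Real.exp_pos _).le) ?_
      exact Finset.mem_filter.2 ⟨hμmem, hμdom⟩
    have hlogge : (n:ℝ) * (M - 3*ε/4) ≤ Real.log (S n) := by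
      have := Real.log_le_log (Real.exp_pos _) hSge
      rwa [Real.log_exp] at this
    have : (1/(n:ℝ)) * ((n:ℝ) * (M - 3*ε/4)) ≤ (1/(n:ℝ)) * Real.log (S n) :=
      mul_le_mul_of_nonneg_left hlogge (by positivity)
    have heq : (1/(n:ℝ)) * ((n:ℝ) * (M - 3*ε/4)) = M - 3*ε/4 := by
      field_simp
    rw [heq] at this
    linarith
  -- conclude
  refine tendsto_order.2 ⟨fun b hb => ?_, fun b hb => ?_⟩
  · filter_upwards [hlo ((M - b)/2) (by linarith)] with n hn
    simp only [hS] at hn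
    linarith
  · filter_upwards [hup ((b - M)/2) (by linarith)] with n hn
    simp only [hS] at hn
    linarith
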